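/- Let (X,d) be a metric space, k ≥ 1, n ≥ 1, let (a_1,b_1),…,(a_n,b_n) ∈ X × X be taxi requests, let c_0 : Fin k → X be any initial configuration, and let δ > 0. Suppose S ⊆ {1,…,n} is a set of indices such that for every i ∈ S and every j < i one has d(b_j, a_i) > δ. Then every k-taxi schedule serving the requests from c_0 has empty-run cost at least (|S| − k)·δ. -/

import Mathlib

/-- deterministic core of Lemma 3.2.
Let `(X,d)` be a metric space, `k ≥ 1`, `n ≥ 1`, `(a 1, b 1), …, (a n, b n)` be taxi
requests, `c 0 : Fin k → X` an arbitrary initial configuration, and `δ > 0`.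
Suppose `S ⊆ {1,…,n}` is a set of indices such that for every `i ∈ S` and every request
index `j < i` one has `d(b j, a i) > δ`. Then every `k`-taxi schedule `(c, s)` serving the
requests from `c 0` has empty-run cost at least `(|S| - k) · δ`. -/
theorem ktaxi_cost_lower_bound_of_separated
    {X : Type*} [MetricSpace X] {k n : ℕ} (hk : 1 ≤ k) (hn : 1 ≤ n)
    (a b : ℕ → X) {δ : ℝ} (hδ : 0 < δ)
    (S : Finset ℕ) (hS : S ⊆ Finset.Icc 1 n)
    (hsep : ∀ i ∈ S, ∀ j, 1 ≤ j → j < i → δ < dist (b j) (a i))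
    (c : ℕ → Fin k → X) (s : ℕ → Fin k)
    (hserve : ∀ t ∈ Finset.Icc 1 n, c t (s t) = b t) :
    ((S.card : ℝ) - k) * δ ≤
      ∑ t ∈ Finset.Icc 1 n,
        (dist (c (t - 1) (s t)) (a t) +
          ∑ i ∈ Finset.univ.erase (s t), dist (c (t - 1) i) (c t i)) := by
  classical
  -- the "atom" values: serving cost at time t, and movement cost of taxi p at time t
  set v : ℕ × Option (Fin k) → ℝ := fun x =>
    Option.elim x.2 (dist (c (x.1 - 1) (s x.1)) (a x.1))
      (fun p => dist (c (x.1 - 1) p) (c x.1 p)) with hv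
  have hv0 : ∀ x, 0 ≤ v x := by
    rintro ⟨t, _ | p⟩ <;> exact dist_nonneg
  -- earlier requests served by the same taxi
  set F : ℕ → Finset ℕ := fun i => (Finset.Ico 1 i).filter (fun j => s j = s i) with hF
  -- charged requests
  set T : Finset ℕ := S.filter (fun i => (F i).Nonempty) with hT
  -- last earlier request served by the same taxi
  set J : ℕ → ℕ := fun i => if h : (F i).Nonempty then (F i).max' h else 0 with hJ
  have hTS : ∀ i ∈ T, i ∈ S := fun i hi => (Finset.mem_filter.mp hi).1
  have hJmem : ∀ i ∈ T, J i ∈ F i := by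
    intro i hi
    have h : (F i).Nonempty := (Finset.mem_filter.mp hi).2
    simp only [hJ, dif_pos h]
    exact (F i).max'_mem h
  have hJprop : ∀ i ∈ T, 1 ≤ J i ∧ J i < i ∧ s (J i) = s i := by
    intro i hi
    have := hJmem i hi
    simp only [hF, Finset.mem_filter, Finset.mem_Ico] at this
    tauto
  have hJmax : ∀ i ∈ T, ∀ t, 1 ≤ t → t < i → s t = s i → t ≤ J i := by
    intro i hi t h1 h2 h3
    have h : (F i).Nonempty := (Finset.mem_filter.mp hi).2
    have ht : t ∈ F i := by
      simp only [hF, Finset.mem_filter, Finset.mem_Ico]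
      exact ⟨⟨h1, h2⟩, h3⟩
    simp only [hJ, dif_pos h]
    exact Finset.le_max' _ _ ht
  -- the set of atoms charged to request i
  set A : ℕ → Finset (ℕ × Option (Fin k)) := fun i =>
    insert (i, (none : Option (Fin k)))
      ((Finset.Ioo (J i) i).image fun t => (t, some (s i))) with hA
  have hAmem : ∀ i x, x ∈ A i ↔
      (x = (i, (none : Option (Fin k))) ∨
        ∃ t, (J i < t ∧ t < i) ∧ x = (t, some (s i))) := by
    intro i x
    simp only [hA, Finset.mem_insert, Finset.mem_image, Finset.mem_Ioo]
    constructor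
    · rintro (h | ⟨t, ht, rfl⟩)
      · exact Or.inl h
      · exact Or.inr ⟨t, ht, rfl⟩
    · rintro (h | ⟨t, ht, rfl⟩)
      · exact Or.inl h
      · exact Or.inr ⟨t, ht, rfl⟩
  -- per-request lower bound
  have hbound : ∀ i ∈ T, δ ≤ ∑ x ∈ A i, v x := by
    intro i hi
    obtain ⟨hJ1, hJlt, hJs⟩ := hJprop i hi
    have hiIcc : i ∈ Finset.Icc 1 n := hS (hTS i hi)
    have hin : i ≤ n := (Finset.mem_Icc.mp hiIcc).2
    have hi1 : 1 ≤ i := (Finset.mem_Icc.mp hiIcc).1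
    set p := s i with hp
    have hJIcc : J i ∈ Finset.Icc 1 n := Finset.mem_Icc.mpr ⟨hJ1, le_trans (le_of_lt hJlt) hin⟩
    have hcJ : c (J i) p = b (J i) := by
      rw [← hJs]; exact hserve _ hJIcc
    have hsepi : δ < dist (b (J i)) (a i) := hsep i (hTS i hi) (J i) hJ1 hJlt
    -- path inequality
    have hpath : dist (c (J i) p) (c (i - 1) p) ≤
        ∑ t ∈ Finset.Ico (J i) (i - 1), dist (c t p) (c (t + 1) p) := by
      exact dist_le_Ico_sum_dist (fun t => c t p) (by omega)
    have himg : Finset.Ioo (J i) i = (Finset.Ico (J i) (i - 1)).image (· + 1) := by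
      ext t
      simp only [Finset.mem_Ioo, Finset.mem_image, Finset.mem_Ico]
      constructor
      · rintro ⟨h1, h2⟩; exact ⟨t - 1, by omega, by omega⟩
      · rintro ⟨u, ⟨h1, h2⟩, rfl⟩; omega
    have hnotmem : (i, (none : Option (Fin k))) ∉
        (Finset.Ioo (J i) i).image fun t => (t, some (s i)) := by
      simp
    have hsum : ∑ x ∈ A i, v x =
        dist (c (i - 1) p) (a i) +
          ∑ t ∈ Finset.Ico (J i) (i - 1), dist (c t p) (c (t + 1) p) := by
      rw [hA, Finset.sum_insert hnotmem,
        Finset.sum_image (by intro x _ y _ h; exact (Prod.mk.injEq ..).mp h |>.1),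
        himg, Finset.sum_image (by intro x _ y _ h; simp only at h; omega)]
      simp only [hv, Option.elim, Nat.add_sub_cancel, hp]
    rw [hsum]
    calc δ ≤ dist (b (J i)) (a i) := le_of_lt hsepi
      _ = dist (c (J i) p) (a i) := by rw [hcJ]
      _ ≤ dist (c (J i) p) (c (i - 1) p) + dist (c (i - 1) p) (a i) := dist_triangle _ _ _
      _ ≤ (∑ t ∈ Finset.Ico (J i) (i - 1), dist (c t p) (c (t + 1) p)) +
            dist (c (i - 1) p) (a i) := by linarith
      _ = _ := by ring
  -- disjointness of the charged atom sets
  have hdisj : ∀ i1 ∈ T, ∀ i2 ∈ T, i1 ≠ i2 → Disjoint (A i1) (A i2) := by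
    have key : ∀ i1 ∈ T, ∀ i2 ∈ T, i1 < i2 → ∀ x, x ∈ A i1 → x ∈ A i2 → False := by
      intro i1 h1 i2 h2 hlt x hx1 hx2
      have hi1S : i1 ∈ S := hTS i1 h1
      have hi1Icc := hS hi1S
      have hi11 : 1 ≤ i1 := (Finset.mem_Icc.mp hi1Icc).1
      rw [hAmem] at hx1 hx2
      rcases hx1 with rfl | ⟨t1, ⟨ht1a, ht1b⟩, rfl⟩
      · rcases hx2 with h | ⟨t2, _, h⟩
        · exact absurd (congrArg Prod.fst h) (by simpa using hlt.ne)
        · exact absurd (congrArg Prod.snd h) (by simp)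
      · rcases hx2 with h | ⟨t2, ⟨ht2a, ht2b⟩, h⟩
        · exact absurd (congrArg Prod.snd h) (by simp)
        · obtain ⟨hte, hse⟩ := Prod.mk.injEq .. |>.mp h
          have hse' : s i1 = s i2 := Option.some.injEq .. |>.mp hse
          have : i1 ≤ J i2 := hJmax i2 h2 i1 hi11 hlt hse'
          omega
    intro i1 h1 i2 h2 hne
    rw [Finset.disjoint_left]
    intro x hx1 hx2
    rcases Nat.lt_or_ge i1 i2 with h | h
    · exact key i1 h1 i2 h2 h x hx1 hx2
    · exact key i2 h2 i1 h1 (lt_of_le_of_ne h (Ne.symm hne)) x hx2 hx1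
  -- all atoms charged belong to the global atom set
  set atoms : Finset (ℕ × Option (Fin k)) :=
    (Finset.Icc 1 n).biUnion (fun t =>
      insert ((t, none) : ℕ × Option (Fin k))
        ((Finset.univ.erase (s t)).image fun p => (t, some p))) with hatoms
  have hsub : ∀ i ∈ T, A i ⊆ atoms := by
    intro i hi x hx
    have hiIcc := hS (hTS i hi)
    have hin : i ≤ n := (Finset.mem_Icc.mp hiIcc).2
    rw [hAmem] at hx
    rw [hatoms, Finset.mem_biUnion]
    rcases hx with rfl | ⟨t, ⟨hta, htb⟩, rfl⟩
    · exact ⟨i, hiIcc, Finset.mem_insert_self _ _⟩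
    · obtain ⟨hJ1, _, _⟩ := hJprop i hi
      have htIcc : t ∈ Finset.Icc 1 n := Finset.mem_Icc.mpr ⟨by omega, by omega⟩
      refine ⟨t, htIcc, Finset.mem_insert_of_mem ?_⟩
      rw [Finset.mem_image]
      refine ⟨s i, ?_, rfl⟩
      rw [Finset.mem_erase]
      refine ⟨?_, Finset.mem_univ _⟩
      intro hst
      have : t ≤ J i := hJmax i hi t (by omega) htb hst.symm
      omega
  -- the total cost equals the sum of v over all atoms
  have hcost : ∑ x ∈ atoms, v x =
      ∑ t ∈ Finset.Icc 1 n,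
        (dist (c (t - 1) (s t)) (a t) +
          ∑ p ∈ Finset.univ.erase (s t), dist (c (t - 1) p) (c t p)) := by
    rw [hatoms, Finset.sum_biUnion]
    · apply Finset.sum_congr rfl
      intro t _
      rw [Finset.sum_insert (by simp)]
      congr 1
      rw [Finset.sum_image (by intro x _ y _ h; exact (Prod.mk.injEq ..).mp h |>.2 |> Option.some_injective _)]
      apply Finset.sum_congr rfl
      intro p _
      simp [hv]
    · intro t1 h1 t2 h2 hne
      simp only [Function.onFun]
      rw [Finset.disjoint_left]
      rintro ⟨u, o⟩ hx1 hx2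
      have e1 : u = t1 := by
        simp only [Finset.mem_insert, Finset.mem_image, Prod.mk.injEq] at hx1
        rcases hx1 with ⟨h, _⟩ | ⟨p, _, h, _⟩ <;> omega
      have e2 : u = t2 := by
        simp only [Finset.mem_insert, Finset.mem_image, Prod.mk.injEq] at hx2
        rcases hx2 with ⟨h, _⟩ | ⟨p, _, h, _⟩ <;> omega
      exact hne (by omega)
  -- counting: at most k requests in S are uncharged
  have hcard : (S.card : ℝ) - k ≤ T.card := by
    have hsplit : T.card + (S.filter (fun i => ¬ (F i).Nonempty)).card = S.card := by
      rw [hT]; exact Finset.card_filter_add_card_filter_not _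
    have hinj : Set.InjOn s (S.filter (fun i => ¬ (F i).Nonempty)) := by
      intro i1 h1 i2 h2 he
      simp only [Finset.coe_filter, Set.mem_setOf_eq] at h1 h2
      by_contra hne
      have key : ∀ j1 j2, j1 ∈ S → j2 ∈ S → ¬ (F j2).Nonempty → j1 < j2 → s j1 = s j2 → False := by
        intro j1 j2 hj1 hj2 hne2 hlt hse
        apply hne2
        refine ⟨j1, ?_⟩
        simp only [hF, Finset.mem_filter, Finset.mem_Ico]
        exact ⟨⟨(Finset.mem_Icc.mp (hS hj1)).1, hlt⟩, hse⟩
      rcases Nat.lt_or_ge i1 i2 with h | h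
      · exact key i1 i2 h1.1 h2.1 h2.2 h he
      · exact key i2 i1 h2.1 h1.1 h1.2 (by omega) he.symm
    have hle : (S.filter (fun i => ¬ (F i).Nonempty)).card ≤ k := by
      have := Finset.card_le_card_of_injOn s
        (fun x _ => Finset.mem_univ (s x)) hinj
      simpa using this
    have : (S.card : ℝ) ≤ (T.card : ℝ) + k := by
      have : S.card ≤ T.card + k := by omega
      exact_mod_cast this
    linarith
  -- put everything together
  rw [← hcost]
  calc ((S.card : ℝ) - k) * δ ≤ (T.card : ℝ) * δ := by
        apply mul_le_mul_of_nonneg_right hcard (le_of_lt hδ)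
    _ = ∑ _i ∈ T, δ := by rw [Finset.sum_const, nsmul_eq_mul]
    _ ≤ ∑ i ∈ T, ∑ x ∈ A i, v x := Finset.sum_le_sum hbound
    _ = ∑ x ∈ T.biUnion A, v x := (Finset.sum_biUnion hdisj).symm
    _ ≤ ∑ x ∈ atoms, v x := by
        apply Finset.sum_le_sum_of_subset_of_nonneg
        · exact Finset.biUnion_subset.mpr hsub
        · intro x _ _; exact hv0 x
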